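/- Let E be a real normed vector space, p* ∈ E, T ≥ 4 an integer, and m : ℕ → E satisfying, for every integer t > T, m t = ((t−3)/(t+1)) • m(t−1) + (4/(t+1)) • p*. Then for every t > T, ‖m t − p*‖ = ‖m T − p*‖ · ((T−2)(T−1)T(T+1)) / ((t−2)(t−1)t(t+1)). In particular ‖m t − p*‖ → 0 as t → ∞, so the effect of any perturbation present at epoch T on the immediate memory unit decays to zero. -/

import Mathlib

private lemma aux_base (a b c N : ℝ) (hb : b ≠ 0) (hc : c ≠ 0) :
    a / b * N = N * ((a * c) / (c * b)) := by
  field_simp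

private lemma aux_step (a b c P N : ℝ) (ha : a ≠ 0) (hb : b ≠ 0) (hc : c ≠ 0) :
    a / b * (N * (P / (a * c))) = N * (P / (c * b)) := by
  field_simp

/-- Decay of a perturbation present at epoch `T`: if predictions equal the
steady state `p*` for all `t > T`, then the immediate-memory error norm
satisfies the exact decay formula
`‖m t − p*‖ = ‖m T − p*‖ · ((T−2)(T−1)T(T+1)) / ((t−2)(t−1)t(t+1))` for all
`t > T`, and in particular `‖m t − p*‖ → 0`. -/
theorem perturbation_decay
    {E : Type*} [NormedAddCommGroup E] [NormedSpace ℝ E]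
    (pstar : E) (T : ℕ) (hT : 4 ≤ T) (m : ℕ → E)
    (hm : ∀ t : ℕ, T < t →
      m t = (((t : ℝ) - 3) / ((t : ℝ) + 1)) • m (t - 1)
        + ((4 : ℝ) / ((t : ℝ) + 1)) • pstar) :
    (∀ t : ℕ, T < t →
      ‖m t - pstar‖ = ‖m T - pstar‖
        * ((((T : ℝ) - 2) * ((T : ℝ) - 1) * (T : ℝ) * ((T : ℝ) + 1))
          / (((t : ℝ) - 2) * ((t : ℝ) - 1) * (t : ℝ) * ((t : ℝ) + 1))))
    ∧ Filter.Tendsto (fun t : ℕ => ‖m t - pstar‖) Filter.atTop (nhds 0) := by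
  -- key step lemma
  have key : ∀ t : ℕ, T < t →
      ‖m t - pstar‖ = (((t : ℝ) - 3) / ((t : ℝ) + 1)) * ‖m (t - 1) - pstar‖ := by
    intro t ht
    have ht5 : (5 : ℕ) ≤ t := by omega
    have ht5' : (5 : ℝ) ≤ (t : ℝ) := by exact_mod_cast ht5
    have hne : ((t : ℝ) + 1) ≠ 0 := by positivity
    have hsum : (4 : ℝ) / ((t : ℝ) + 1) = 1 - ((t : ℝ) - 3) / ((t : ℝ) + 1) := by
      field_simp
      ring
    have : m t - pstar = (((t : ℝ) - 3) / ((t : ℝ) + 1)) • (m (t - 1) - pstar) := by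
      rw [hm t ht, hsum, smul_sub, sub_smul, one_smul]
      abel
    rw [this, norm_smul, Real.norm_eq_abs, abs_of_nonneg]
    apply div_nonneg <;> linarith
  have hformula : ∀ t : ℕ, T < t →
      ‖m t - pstar‖ = ‖m T - pstar‖
        * ((((T : ℝ) - 2) * ((T : ℝ) - 1) * (T : ℝ) * ((T : ℝ) + 1))
          / (((t : ℝ) - 2) * ((t : ℝ) - 1) * (t : ℝ) * ((t : ℝ) + 1))) := by
    intro t ht
    induction t, ht using Nat.le_induction with
    | base =>
      rw [key (T + 1) (by omega)]
      simp only [Nat.add_sub_cancel]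
      have hT' : (4 : ℝ) ≤ (T : ℝ) := by exact_mod_cast hT
      push_cast
      have := aux_base ((T : ℝ) - 2) ((T : ℝ) + 2) (((T : ℝ) - 1) * (T : ℝ) * ((T : ℝ) + 1))
        ‖m T - pstar‖ (by linarith)
        (by apply mul_ne_zero; apply mul_ne_zero <;> linarith; linarith)
      rw [show ((T : ℝ) + 1 - 3) / ((T : ℝ) + 1 + 1) = ((T : ℝ) - 2) / ((T : ℝ) + 2) by ring_nf]
      rw [this]
      ring_nf
    | succ n hn ih =>
      have hn' : T < n := hn
      rw [key (n + 1) (by omega)]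
      simp only [Nat.add_sub_cancel]
      rw [ih]
      have hT' : (4 : ℝ) ≤ (T : ℝ) := by exact_mod_cast hT
      have hn4 : (4 : ℝ) ≤ (n : ℝ) := by exact_mod_cast (by omega : 4 ≤ n)
      push_cast
      have := aux_step ((n : ℝ) - 2) ((n : ℝ) + 2) (((n : ℝ) - 1) * (n : ℝ) * ((n : ℝ) + 1))
        (((T : ℝ) - 2) * ((T : ℝ) - 1) * (T : ℝ) * ((T : ℝ) + 1)) ‖m T - pstar‖
        (by linarith) (by linarith)
        (by apply mul_ne_zero; apply mul_ne_zero <;> linarith; linarith)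
      rw [show ((n : ℝ) + 1 - 3) / ((n : ℝ) + 1 + 1) = ((n : ℝ) - 2) / ((n : ℝ) + 2) by ring_nf]
      rw [show ((n : ℝ) - 2) * ((n : ℝ) - 1) * (n : ℝ) * ((n : ℝ) + 1)
        = ((n : ℝ) - 2) * (((n : ℝ) - 1) * (n : ℝ) * ((n : ℝ) + 1)) by ring] at *
      rw [this]
      ring_nf
  refine ⟨hformula, ?_⟩
  -- limit
  have hdenom : Filter.Tendsto
      (fun t : ℕ => ((t : ℝ) - 2) * ((t : ℝ) - 1) * (t : ℝ) * ((t : ℝ) + 1))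
      Filter.atTop Filter.atTop := by
    have h0 : Filter.Tendsto (fun t : ℕ => (t : ℝ)) Filter.atTop Filter.atTop :=
      tendsto_natCast_atTop_atTop
    exact (((h0.atTop_add tendsto_const_nhds).atTop_mul_atTop₀
        (h0.atTop_add tendsto_const_nhds)).atTop_mul_atTop₀ h0).atTop_mul_atTop₀
        (h0.atTop_add tendsto_const_nhds)
  have hlim : Filter.Tendsto
      (fun t : ℕ => ‖m T - pstar‖
        * ((((T : ℝ) - 2) * ((T : ℝ) - 1) * (T : ℝ) * ((T : ℝ) + 1))
          / (((t : ℝ) - 2) * ((t : ℝ) - 1) * (t : ℝ) * ((t : ℝ) + 1))))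
      Filter.atTop (nhds 0) := by
    have := hdenom.inv_tendsto_atTop
    have h2 : Filter.Tendsto
        (fun t : ℕ => (((T : ℝ) - 2) * ((T : ℝ) - 1) * (T : ℝ) * ((T : ℝ) + 1))
          / (((t : ℝ) - 2) * ((t : ℝ) - 1) * (t : ℝ) * ((t : ℝ) + 1)))
        Filter.atTop (nhds 0) := by
      simpa [div_eq_mul_inv] using this.const_mul
        (((T : ℝ) - 2) * ((T : ℝ) - 1) * (T : ℝ) * ((T : ℝ) + 1))
    simpa using h2.const_mul ‖m T - pstar‖
  exact hlim.congr' (Filter.eventually_atTop.2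
    ⟨T + 1, fun t ht => (hformula t (by omega)).symm⟩)
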